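/- If p is a permutation of length n that is not the increasing permutation, then there exists a block move that decreases the number of bad pairs of p by at least two. -/

import Mathlib

/-- Number of descents of a list (one-line notation). -/
def desNum (p : List ℕ) : ℕ :=
  ((Finset.range (p.length - 1)).filter (fun i => p.getD (i+1) 0 < p.getD i 0)).card

/-- The extension of `p` by a leading `0` and trailing `n+1`. -/
def extList (p : List ℕ) : List ℕ := 0 :: (p ++ [p.length + 1])

/-- Number of bad pairs of `p`. -/
def badNum (p : List ℕ) : ℕ :=
  ((Finset.range (p.length + 1)).filter
    (fun i => (extList p).getD i 0 + 1 ≠ (extList p).getD (i+1) 0)).card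

/-- `q` is obtained from `p` by one block move: interchanging two disjoint
nonempty blocks of consecutive entries. -/
def IsBlockMove (p q : List ℕ) : Prop :=
  ∃ A X B Y C : List ℕ, X ≠ [] ∧ Y ≠ [] ∧
    p = A ++ X ++ B ++ Y ++ C ∧ q = A ++ Y ++ B ++ X ++ C

/-- `p` is a permutation of `{1,…,n}` in one-line notation. -/
def IsPermList (p : List ℕ) : Prop := p.Perm (List.range' 1 p.length)

/-- `p` can be sorted to the identity `1 2 … n` using at most `k` block moves. -/
def SortableIn (p : List ℕ) (k : ℕ) : Prop :=
  ∃ m ≤ k, ∃ f : ℕ → List ℕ, f 0 = p ∧ f m = List.range' 1 p.length ∧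
    ∀ i < m, IsBlockMove (f i) (f (i+1))

def dd (a b : ℕ) : ℕ := if a + 1 = b then 0 else 1

/-- Bad-pair count of the chain `a :: l`. -/
def FF : ℕ → List ℕ → ℕ
  | _, [] => 0
  | a, b :: l => dd a b + FF b l

lemma dd_le (a b : ℕ) : dd a b ≤ 1 := by unfold dd; split <;> simp

lemma dd_eq_zero {a b : ℕ} (h : a + 1 = b) : dd a b = 0 := by simp [dd, h]

lemma dd_eq_one {a b : ℕ} (h : a + 1 ≠ b) : dd a b = 1 := by simp [dd, h]

lemma FF_append (l1 l2 : List ℕ) (a : ℕ) :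
    FF a (l1 ++ l2) = FF a l1 + FF (l1.getLastD a) l2 := by
  induction l1 generalizing a with
  | nil => simp [FF]
  | cons b l ih =>
    rw [List.cons_append, List.getLastD_cons]
    show dd a b + FF b (l ++ l2) = FF a (b :: l) + FF (l.getLastD b) l2
    rw [ih b]
    show _ = dd a b + FF b l + _
    omega

lemma getLastD_irrel {l : List ℕ} (h : l ≠ []) (d₁ d₂ : ℕ) :
    l.getLastD d₁ = l.getLastD d₂ := by
  cases l with
  | nil => simp at h
  | cons a l => rw [List.getLastD_cons, List.getLastD_cons]

lemma FF_append' (l1 l2 : List ℕ) (a : ℕ) (h : l1 ≠ []) :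
    FF a (l1 ++ l2) = FF a l1 + FF (l1.getLastD 0) l2 := by
  rw [FF_append, getLastD_irrel h]

lemma FF_eq (a : ℕ) {l : List ℕ} (h : l ≠ []) :
    FF a l = dd a (l.headD 0) + FF (l.headD 0) l.tail := by
  cases l with
  | nil => simp at h
  | cons b m => simp [FF]

lemma headD_mem {l : List ℕ} (h : l ≠ []) : l.headD 0 ∈ l := by
  cases l with
  | nil => simp at h
  | cons b m => simp

lemma getLastD_mem : ∀ (l : List ℕ) (d : ℕ), l ≠ [] → l.getLastD d ∈ l := by
  intro l
  induction l with
  | nil => intro d h; simp at h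
  | cons b m ih =>
    intro d _
    rw [List.getLastD_cons]
    rcases eq_or_ne m [] with rfl | hm
    · simp
    · exact List.mem_cons_of_mem _ (ih b hm)

lemma card_aux (l : List ℕ) (a : ℕ) :
    ((Finset.range l.length).filter
      (fun i => (a :: l).getD i 0 + 1 ≠ (a :: l).getD (i+1) 0)).card = FF a l := by
  induction l generalizing a with
  | nil => simp [FF]
  | cons b m ih =>
    have ih' := ih b
    simp only [Finset.card_filter] at ih' ⊢
    simp only [List.length_cons]
    rw [Finset.sum_range_succ']
    have h1 : ∀ i : ℕ, (if (a :: b :: m).getD (i+1) 0 + 1 ≠ (a :: b :: m).getD (i+1+1) 0 then (1:ℕ) else 0)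
        = (if (b :: m).getD i 0 + 1 ≠ (b :: m).getD (i+1) 0 then (1:ℕ) else 0) := by
      intro i
      simp [List.getD_cons_succ]
    simp only [h1]
    rw [ih']
    have h0 : (if (a :: b :: m).getD 0 0 + 1 ≠ (a :: b :: m).getD (0+1) 0 then (1:ℕ) else 0) = dd a b := by
      by_cases hab : a + 1 = b <;> simp [dd, hab, List.getD_cons_succ]
    rw [h0]
    show FF b m + dd a b = dd a b + FF b m
    omega

lemma badNum_eq (p : List ℕ) : badNum p = FF 0 (p ++ [p.length + 1]) := by
  have h := card_aux (p ++ [p.length + 1]) 0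
  unfold badNum extList
  rw [← h]
  congr 2
  simp

lemma swap4 (P X Y D : List ℕ) (hX : X ≠ []) (hY : Y ≠ []) (hD : D ≠ [])
    (h1 : dd (P.getLastD 0) (Y.headD 0) = 0)
    (h2 : dd (Y.getLastD 0) (X.headD 0) = 0)
    (h3 : dd (P.getLastD 0) (X.headD 0) = 1)
    (h4 : dd (X.getLastD 0) (Y.headD 0) = 1)
    (h5 : dd (Y.getLastD 0) (D.headD 0) = 1) :
    FF 0 (P ++ (Y ++ (X ++ D))) + 2 ≤ FF 0 (P ++ (X ++ (Y ++ D))) := by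
  have e1 : FF 0 (P ++ (X ++ (Y ++ D))) = FF 0 P
      + (dd (P.getLastD 0) (X.headD 0) + FF (X.headD 0) X.tail)
      + (dd (X.getLastD 0) (Y.headD 0) + FF (Y.headD 0) Y.tail)
      + (dd (Y.getLastD 0) (D.headD 0) + FF (D.headD 0) D.tail) := by
    rw [FF_append P _ 0, FF_append' X _ _ hX, FF_append' Y _ _ hY,
      FF_eq (P.getLastD 0) hX, FF_eq (X.getLastD 0) hY, FF_eq (Y.getLastD 0) hD]
    ring
  have e2 : FF 0 (P ++ (Y ++ (X ++ D))) = FF 0 P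
      + (dd (P.getLastD 0) (Y.headD 0) + FF (Y.headD 0) Y.tail)
      + (dd (Y.getLastD 0) (X.headD 0) + FF (X.headD 0) X.tail)
      + (dd (X.getLastD 0) (D.headD 0) + FF (D.headD 0) D.tail) := by
    rw [FF_append P _ 0, FF_append' Y _ _ hY, FF_append' X _ _ hX,
      FF_eq (P.getLastD 0) hY, FF_eq (Y.getLastD 0) hX, FF_eq (X.getLastD 0) hD]
    ring
  have := dd_le (X.getLastD 0) (D.headD 0)
  omega

lemma swap5 (P X B Y D : List ℕ) (hX : X ≠ []) (hB : B ≠ []) (hY : Y ≠ []) (hD : D ≠ [])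
    (h1 : dd (P.getLastD 0) (Y.headD 0) = 0)
    (h2 : dd (Y.getLastD 0) (B.headD 0) = 0)
    (h3 : dd (P.getLastD 0) (X.headD 0) = 1)
    (h4 : dd (X.getLastD 0) (B.headD 0) = 1)
    (h5 : dd (B.getLastD 0) (Y.headD 0) = 1)
    (h6 : dd (Y.getLastD 0) (D.headD 0) = 1) :
    FF 0 (P ++ (Y ++ (B ++ (X ++ D)))) + 2 ≤ FF 0 (P ++ (X ++ (B ++ (Y ++ D)))) := by
  have e1 : FF 0 (P ++ (X ++ (B ++ (Y ++ D)))) = FF 0 P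
      + (dd (P.getLastD 0) (X.headD 0) + FF (X.headD 0) X.tail)
      + (dd (X.getLastD 0) (B.headD 0) + FF (B.headD 0) B.tail)
      + (dd (B.getLastD 0) (Y.headD 0) + FF (Y.headD 0) Y.tail)
      + (dd (Y.getLastD 0) (D.headD 0) + FF (D.headD 0) D.tail) := by
    rw [FF_append P _ 0, FF_append' X _ _ hX, FF_append' B _ _ hB,
      FF_append' Y _ _ hY, FF_eq (P.getLastD 0) hX, FF_eq (X.getLastD 0) hB,
      FF_eq (B.getLastD 0) hY, FF_eq (Y.getLastD 0) hD]
    ring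
  have e2 : FF 0 (P ++ (Y ++ (B ++ (X ++ D)))) = FF 0 P
      + (dd (P.getLastD 0) (Y.headD 0) + FF (Y.headD 0) Y.tail)
      + (dd (Y.getLastD 0) (B.headD 0) + FF (B.headD 0) B.tail)
      + (dd (B.getLastD 0) (X.headD 0) + FF (X.headD 0) X.tail)
      + (dd (X.getLastD 0) (D.headD 0) + FF (D.headD 0) D.tail) := by
    rw [FF_append P _ 0, FF_append' Y _ _ hY, FF_append' B _ _ hB,
      FF_append' X _ _ hX, FF_eq (P.getLastD 0) hY, FF_eq (Y.getLastD 0) hB,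
      FF_eq (B.getLastD 0) hX, FF_eq (X.getLastD 0) hD]
    ring
  have hb1 := dd_le (B.getLastD 0) (X.headD 0)
  have hb2 := dd_le (X.getLastD 0) (D.headD 0)
  omega

lemma range'_getLastD (k : ℕ) : (List.range' 1 k).getLastD 0 = k := by
  cases k with
  | zero => rfl
  | succ m => rw [List.range'_concat, List.getLastD_concat]; omega

lemma range'_concat_1 (k : ℕ) : List.range' 1 (k+1) = List.range' 1 k ++ [k+1] := by
  rw [List.range'_concat]; norm_num [Nat.add_comm]

/-- For any non-identity permutation there is a block move decreasing the
number of bad pairs by at least two. -/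
theorem exists_good_blockMove (p : List ℕ) (hp : IsPermList p)
    (h : p ≠ List.range' 1 p.length) :
    ∃ q, IsBlockMove p q ∧ badNum q + 2 ≤ badNum p := by
  classical
  have hp' : p.Perm (List.range' 1 p.length) := hp
  have hnodup : p.Nodup := hp'.symm.nodup List.nodup_range'
  have hmem : ∀ v, v ∈ p ↔ 1 ≤ v ∧ v < 1 + p.length := by
    intro v; rw [hp'.mem_iff, List.mem_range'_1]
  obtain ⟨k, hPk, hkn, hnot⟩ :
      ∃ k, p.take k = List.range' 1 k ∧ k ≤ p.length ∧
        (k + 1 ≤ p.length → p.take (k+1) ≠ List.range' 1 (k+1)) := by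
    refine ⟨Nat.findGreatest (fun m => p.take m = List.range' 1 m) p.length, ?_,
      Nat.findGreatest_le _,
      fun hle => Nat.findGreatest_is_greatest (Nat.lt_succ_self _) hle⟩
    exact Nat.findGreatest_spec (P := fun m => p.take m = List.range' 1 m)
      (Nat.zero_le _) rfl
  have hklt : k < p.length := by
    rcases Nat.lt_or_ge k p.length with h' | h'
    · exact h'
    · exfalso
      apply h
      have h2 := hPk
      have hke : k = p.length := le_antisymm hkn h'
      rw [hke, List.take_length] at h2
      exact h2
  have hxp : k + 1 ∈ p := (hmem _).mpr ⟨by omega, by omega⟩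
  have hsplit : p = List.range' 1 k ++ p.drop k := by
    conv_lhs => rw [← List.take_append_drop k p]
    rw [hPk]
  have hxD : k + 1 ∈ p.drop k := by
    have h3 : k + 1 ∈ List.range' 1 k ++ p.drop k := hsplit ▸ hxp
    rcases List.mem_append.mp h3 with hc | hc
    · rw [List.mem_range'_1] at hc; omega
    · exact hc
  obtain ⟨E, G, hEG⟩ := List.append_of_mem hxD
  have hpdec : p = List.range' 1 k ++ (E ++ (k+1) :: G) := by rw [hsplit, hEG]
  have hEne : E ≠ [] := by
    intro hE0
    subst hE0
    apply hnot (by omega)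
    · rw [hpdec, List.nil_append,
        show List.range' 1 k ++ (k+1) :: G = (List.range' 1 k ++ [k+1]) ++ G by simp,
        ← range'_concat_1]
      exact List.take_left' (by rw [List.length_range'])
  have hnd : (List.range' 1 k ++ (E ++ (k+1) :: G)).Nodup := hpdec ▸ hnodup
  rw [List.nodup_append] at hnd
  obtain ⟨-, hnd2, hdisj1⟩ := hnd
  rw [List.nodup_append] at hnd2
  obtain ⟨-, -, hdisj2⟩ := hnd2
  have hEval : ∀ v ∈ E, k + 2 ≤ v ∧ v < 1 + p.length := by
    intro v hv
    have hvp : v ∈ p := by rw [hpdec]; simp [hv]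
    obtain ⟨h1, h2⟩ := (hmem v).mp hvp
    have hv1 : v ∉ List.range' 1 k := fun hc => hdisj1 v hc v (by simp [hv]) rfl
    rw [List.mem_range'_1] at hv1
    have hvx : v ≠ k+1 := fun hc => hdisj2 v hv v (by simp [hc]) rfl
    omega
  have hTne : E.toFinset.Nonempty := by
    rcases E with - | ⟨e, E'⟩
    · exact absurd rfl hEne
    · exact ⟨e, by simp⟩
  set u := E.toFinset.min' hTne with hudef
  have hu : u ∈ E := List.mem_toFinset.mp (E.toFinset.min'_mem hTne)
  have humin : ∀ v ∈ E, u ≤ v := fun v hv => Finset.min'_le _ _ (List.mem_toFinset.mpr hv)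
  obtain ⟨hukk, hun⟩ := hEval u hu
  obtain ⟨w, hw⟩ : ∃ w, u = w + 1 := ⟨u - 1, by omega⟩
  have hwE : w ∉ E := fun hc => by have := humin w hc; omega
  have hwG : w ∈ (k+1) :: G := by
    have hwp : w ∈ p := (hmem w).mpr ⟨by omega, by omega⟩
    rw [hpdec] at hwp
    rcases List.mem_append.mp hwp with hc | hc
    · rw [List.mem_range'_1] at hc; omega
    · rcases List.mem_append.mp hc with hc2 | hc2
      · exact absurd hc2 hwE
      · exact hc2
  obtain ⟨s, C, hsC⟩ := List.append_of_mem hwG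
  obtain ⟨X, B', hXB⟩ := List.append_of_mem hu
  have hYC : (s ++ [w]) ++ C = (k+1) :: G := by rw [hsC]; simp
  have hYne : s ++ [w] ≠ [] := by simp
  have hYhead : (s ++ [w]).headD 0 = k + 1 := by
    cases s with
    | nil =>
      simp only [List.nil_append] at hsC ⊢
      injection hsC with h1 h2
      simp [h1]
    | cons a s' =>
      simp only [List.cons_append] at hsC ⊢
      injection hsC with h1 h2
      simp [h1]
  have hYlast : (s ++ [w]).getLastD 0 = w := List.getLastD_concat
  have hDne : C ++ [p.length+1] ≠ [] := by simp
  have hdval : dd w ((C ++ [p.length+1]).headD 0) = 1 := by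
    cases C with
    | nil =>
      simp only [List.nil_append, List.headD_cons]
      exact dd_eq_one (by omega)
    | cons c C' =>
      simp only [List.cons_append, List.headD_cons]
      apply dd_eq_one
      intro hc
      have hcG : c ∈ (k+1) :: G := by rw [hsC]; simp
      have hcu : u ∈ (k+1) :: G := by rw [hw, hc]; exact hcG
      exact hdisj2 u hu u hcu rfl
  have hkhead : ∀ v ∈ E, dd k v = 1 := by
    intro v hv
    exact dd_eq_one (by have := (hEval v hv).1; omega)
  rcases X with - | ⟨x0, X'⟩
  · -- Case A : u is the head of E
    simp only [List.nil_append] at hXB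
    refine ⟨List.range' 1 k ++ (s ++ [w]) ++ [] ++ E ++ C, ⟨List.range' 1 k, E, [], s ++ [w], C,
      hEne, hYne, ?_, rfl⟩, ?_⟩
    · rw [hpdec, ← hYC]; simp [List.append_assoc]
    · have hqlen : (List.range' 1 k ++ (s ++ [w]) ++ [] ++ E ++ C).length = p.length := by
        conv_rhs => rw [hpdec, ← hYC]
        simp [List.length_append]
        omega
      rw [badNum_eq, badNum_eq, hqlen]
      have hpe : p ++ [p.length+1]
          = List.range' 1 k ++ (E ++ ((s ++ [w]) ++ (C ++ [p.length+1]))) := by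
        rw [hpdec, ← hYC]; simp [List.append_assoc]
      have hqe : (List.range' 1 k ++ (s ++ [w]) ++ [] ++ E ++ C) ++ [p.length+1]
          = List.range' 1 k ++ ((s ++ [w]) ++ (E ++ (C ++ [p.length+1]))) := by
        simp [List.append_assoc]
      rw [hpe, hqe]
      apply swap4 _ _ _ _ hEne hYne hDne
      · rw [range'_getLastD, hYhead]; exact dd_eq_zero rfl
      · rw [hYlast, hXB]; simp only [List.headD_cons]; exact dd_eq_zero hw.symm
      · rw [range'_getLastD, hXB]; simp only [List.headD_cons]
        exact dd_eq_one (by omega)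
      · rw [hYhead]
        have hmemE := getLastD_mem E 0 hEne
        exact dd_eq_one (by have := (hEval _ hmemE).1; omega)
      · rw [hYlast]; exact hdval
  · -- Case B : u is not the head of E
    have hXne : x0 :: X' ≠ [] := by simp
    have hBne : u :: B' ≠ [] := by simp
    refine ⟨List.range' 1 k ++ (s ++ [w]) ++ (u :: B') ++ (x0 :: X') ++ C,
      ⟨List.range' 1 k, x0 :: X', u :: B', s ++ [w], C, hXne, hYne, ?_, rfl⟩, ?_⟩
    · rw [hpdec, hXB, ← hYC]; simp [List.append_assoc]
    · have hqlen : (List.range' 1 k ++ (s ++ [w]) ++ (u :: B') ++ (x0 :: X') ++ C).length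
          = p.length := by
        conv_rhs => rw [hpdec, hXB, ← hYC]
        simp [List.length_append]
        omega
      rw [badNum_eq, badNum_eq, hqlen]
      have hpe : p ++ [p.length+1] = List.range' 1 k
          ++ ((x0 :: X') ++ ((u :: B') ++ ((s ++ [w]) ++ (C ++ [p.length+1])))) := by
        rw [hpdec, hXB, ← hYC]; simp [List.append_assoc]
      have hqe : (List.range' 1 k ++ (s ++ [w]) ++ (u :: B') ++ (x0 :: X') ++ C) ++ [p.length+1]
          = List.range' 1 k
          ++ ((s ++ [w]) ++ ((u :: B') ++ ((x0 :: X') ++ (C ++ [p.length+1])))) := by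
        simp [List.append_assoc]
      rw [hpe, hqe]
      have hsubX : ∀ v ∈ x0 :: X', v ∈ E := by
        intro v hv; rw [hXB]; exact List.mem_append_left _ hv
      have hsubB : ∀ v ∈ u :: B', v ∈ E := by
        intro v hv; rw [hXB]; exact List.mem_append_right _ hv
      apply swap5 _ _ _ _ _ hXne hBne hYne hDne
      · rw [range'_getLastD, hYhead]; exact dd_eq_zero rfl
      · rw [hYlast]; simp only [List.headD_cons]; exact dd_eq_zero hw.symm
      · rw [range'_getLastD]
        exact hkhead _ (hsubX _ (headD_mem hXne))
      · simp only [List.headD_cons]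
        apply dd_eq_one
        intro hc
        have hXlmem : (x0 :: X').getLastD 0 ∈ E := hsubX _ (getLastD_mem _ 0 hXne)
        have : (x0 :: X').getLastD 0 = w := by omega
        exact hwE (this ▸ hXlmem)
      · rw [hYhead]
        have hBlmem : (u :: B').getLastD 0 ∈ E := hsubB _ (getLastD_mem _ 0 hBne)
        exact dd_eq_one (by have := (hEval _ hBlmem).1; omega)
      · rw [hYlast]; exact hdval
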